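/- Let p, q, r, ω : ℝ → ℝ be differentiable functions such that for all t: p(t)² + q(t)² + r(t)² = 1, p′(t)² + q′(t)² + r′(t)² = ω′(t)², and ω′(t) ≠ 0. Define l = p·sin ω + (p′/ω′)·cos ω, m = q·sin ω + (q′/ω′)·cos ω, n = r·sin ω + (r′/ω′)·cos ω, λ = p·cos ω − (p′/ω′)·sin ω, μ = q·cos ω − (q′/ω′)·sin ω, ν = r·cos ω − (r′/ω′)·sin ω. Then for all t: l(t)·λ(t) + m(t)·μ(t) + n(t)·ν(t) = 0. -/

import Mathlib

open Real

theorem euler_jacobian_columns_orthogonal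
    (p q r ω : ℝ → ℝ)
    (hp : Differentiable ℝ p) (hq : Differentiable ℝ q) (hr : Differentiable ℝ r)
    (hω : Differentiable ℝ ω)
    (hunit : ∀ t, (p t) ^ 2 + (q t) ^ 2 + (r t) ^ 2 = 1)
    (hspeed : ∀ t, (deriv p t) ^ 2 + (deriv q t) ^ 2 + (deriv r t) ^ 2 = (deriv ω t) ^ 2)
    (hω' : ∀ t, deriv ω t ≠ 0)
    (l m n lam mu nu : ℝ → ℝ)
    (hl : ∀ t, l t = p t * sin (ω t) + (deriv p t / deriv ω t) * cos (ω t))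
    (hm : ∀ t, m t = q t * sin (ω t) + (deriv q t / deriv ω t) * cos (ω t))
    (hn : ∀ t, n t = r t * sin (ω t) + (deriv r t / deriv ω t) * cos (ω t))
    (hlam : ∀ t, lam t = p t * cos (ω t) - (deriv p t / deriv ω t) * sin (ω t))
    (hmu : ∀ t, mu t = q t * cos (ω t) - (deriv q t / deriv ω t) * sin (ω t))
    (hnu : ∀ t, nu t = r t * cos (ω t) - (deriv r t / deriv ω t) * sin (ω t)) :
    ∀ t : ℝ, l t * lam t + m t * mu t + n t * nu t = 0 := by
  intro t
  -- derivative of the unit constraint gives p p' + q q' + r r' = 0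
  have hderiv : deriv (fun t => (p t) ^ 2 + (q t) ^ 2 + (r t) ^ 2) t = 0 := by
    have : (fun t => (p t) ^ 2 + (q t) ^ 2 + (r t) ^ 2) = fun _ => (1 : ℝ) := by
      funext s; exact hunit s
    rw [this, deriv_const]
  have hd : deriv (fun t => (p t) ^ 2 + (q t) ^ 2 + (r t) ^ 2) t =
      2 * p t * deriv p t + 2 * q t * deriv q t + 2 * r t * deriv r t := by
    have h1 : deriv (fun t => (p t) ^ 2) t = 2 * p t * deriv p t := by
      have := (hp t).hasDerivAt.fun_pow 2
      simpa [mul_comm, mul_assoc, mul_left_comm] using this.deriv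
    have h2 : deriv (fun t => (q t) ^ 2) t = 2 * q t * deriv q t := by
      have := (hq t).hasDerivAt.fun_pow 2
      simpa [mul_comm, mul_assoc, mul_left_comm] using this.deriv
    have h3 : deriv (fun t => (r t) ^ 2) t = 2 * r t * deriv r t := by
      have := (hr t).hasDerivAt.fun_pow 2
      simpa [mul_comm, mul_assoc, mul_left_comm] using this.deriv
    rw [deriv_fun_add (((hp t).fun_pow 2).fun_add ((hq t).fun_pow 2)) ((hr t).fun_pow 2),
      deriv_fun_add ((hp t).fun_pow 2) ((hq t).fun_pow 2), h1, h2, h3]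
  have hpp : p t * deriv p t + q t * deriv q t + r t * deriv r t = 0 := by
    have := hderiv.symm.trans hd
    nlinarith [this]
  have hw := hω' t
  have hs := hspeed t
  have hu := hunit t
  have hB : (deriv p t / deriv ω t) ^ 2 + (deriv q t / deriv ω t) ^ 2
      + (deriv r t / deriv ω t) ^ 2 = 1 := by
    field_simp
    linarith [hs]
  have hC : p t * (deriv p t / deriv ω t) + q t * (deriv q t / deriv ω t)
      + r t * (deriv r t / deriv ω t) = 0 := by
    field_simp
    linarith [hpp]
  rw [hl, hm, hn, hlam, hmu, hnu]
  linear_combination (sin (ω t) * cos (ω t)) * hu - (sin (ω t) * cos (ω t)) * hB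
    + (cos (ω t) ^ 2 - sin (ω t) ^ 2) * hC
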